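/- For the branching from Spin_{2n} to Spin_{2n-1}: a pair of dominant weights (ν, ν̂) lies in the lattice generated by the branching semigroup if and only if all the numbers 2ν₁,…,2ν_{n-1}, 2ν̂₁,…,2ν̂_n are integers of the same parity, and the branching semigroup LR(Spin_{2n-1}, Spin_{2n}) is saturated: it equals the intersection of this lattice with the cone given by ν̂₁ ≥ ν₁ ≥ ν̂₂ ≥ ν₂ ≥ ⋯ ≥ ν_{n-1} ≥ |ν̂_n|. -/

import Mathlib

/-- The interlaced sequence `(ν̂₁, ν₁, ν̂₂, ν₂, …, ν_{n-1}, ν̂_n)` (of length `2n−1`) attached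
to a pair `(ν, ν̂)` of weights for `(Spin_{2n-1}, Spin_{2n})`. -/
def interl (n : ℕ) (p : (Fin (n - 1) → ℚ) × (Fin n → ℚ)) (j : ℕ) : ℚ :=
  if h : j < 2 * n - 1 then
    if h2 : j % 2 = 0 then p.2 ⟨j / 2, by omega⟩ else p.1 ⟨j / 2, by omega⟩
  else 0

/-- The interlacing inequalities `ν̂₁ ≥ ν₁ ≥ ν̂₂ ≥ ν₂ ≥ ⋯ ≥ ν_{n-1} ≥ |ν̂_n|`. -/
def ineqBD (n : ℕ) (i : ℕ) (p : (Fin (n - 1) → ℚ) × (Fin n → ℚ)) : Prop :=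
  if i < 2 * n - 3 then interl n p (i + 1) ≤ interl n p i
  else if i = 2 * n - 3 then interl n p (2 * n - 2) ≤ interl n p (2 * n - 3)
  else - interl n p (2 * n - 2) ≤ interl n p (2 * n - 3)

/-- A family of rationals consists of half-integers all of the same parity `e` (i.e. each
`2x` is an integer congruent to `e` mod `2`). -/
def SamePar {ι : Type} (e : ℤ) (x : ι → ℚ) : Prop :=
  ∀ i, ∃ z : ℤ, 2 * x i = (z : ℚ) ∧ (z - e) % 2 = 0

lemma interl_add (n : ℕ) (p q : (Fin (n - 1) → ℚ) × (Fin n → ℚ)) (j : ℕ) :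
    interl n (p + q) j = interl n p j + interl n q j := by
  unfold interl
  split_ifs with h h2
  · rfl
  · rfl
  · ring

lemma half_int_diff (a b : ℚ) (z w e : ℤ) (ha : 2 * a = z) (hb : 2 * b = w)
    (hz : (z - e) % 2 = 0) (hw : (w - e) % 2 = 0) : ∃ c : ℤ, a - b = c := by
  have h2 : (z - w) % 2 = 0 := by omega
  obtain ⟨c, hc⟩ : ∃ c : ℤ, z - w = 2 * c := ⟨(z - w) / 2, by omega⟩
  refine ⟨c, ?_⟩
  have : (2 : ℚ) * (a - b) = ((2 * c : ℤ) : ℚ) := by push_cast [← hc]; linarith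
  push_cast at this; linarith

lemma interl_stair (n : ℕ) (e : ℤ) (K : ℕ) (j : ℕ) (hj : j < 2 * n - 1) :
    interl n (fun i : Fin (n-1) => (e:ℚ)/2 + (K:ℚ) * ((2*n-2-2*(i:ℕ) : ℕ):ℚ),
              fun i : Fin n => (e:ℚ)/2 + (K:ℚ) * ((2*n-1-2*(i:ℕ) : ℕ):ℚ)) j
      = (e:ℚ)/2 + (K:ℚ) * ((2*n-1-j : ℕ):ℚ) := by
  unfold interl
  rw [dif_pos hj]
  by_cases h2 : j % 2 = 0
  · rw [dif_pos h2]
    have : 2*n-1-2*(j/2) = 2*n-1-j := by omega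
    simp only [this]
  · rw [dif_neg h2]
    have : 2*n-2-2*(j/2) = 2*n-1-j := by omega
    simp only [this]

set_option maxHeartbeats 1000000 in
/-- Construction of a large staircase `r` such that both `r` and `p + r` satisfy all
the branching conditions. -/
lemma construct (n : ℕ) (hn : 2 ≤ n) (e : ℤ) (p : (Fin (n-1) → ℚ) × (Fin n → ℚ))
    (h1 : SamePar e p.1) (h2 : SamePar e p.2) :
    ∃ r : (Fin (n-1) → ℚ) × (Fin n → ℚ),
      ((∃ e' : ℤ, SamePar e' r.1) ∧ (∃ e' : ℤ, SamePar e' r.2) ∧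
        (∀ i : Fin (2 * n - 1), ineqBD n (i : ℕ) r) ∧
        (∀ (i : Fin (n - 1)) (j : Fin n), ∃ z : ℤ, r.1 i - r.2 j = (z : ℚ)))
      ∧ ((∃ e' : ℤ, SamePar e' (p+r).1) ∧ (∃ e' : ℤ, SamePar e' (p+r).2) ∧
        (∀ i : Fin (2 * n - 1), ineqBD n (i : ℕ) (p+r)) ∧
        (∀ (i : Fin (n - 1)) (j : Fin n), ∃ z : ℤ, (p+r).1 i - (p+r).2 j = (z : ℚ))) := by
  set B : ℚ := ∑ j ∈ Finset.range (2*n-1), |interl n p j| with hBdef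
  have hB : ∀ j, j < 2*n-1 → |interl n p j| ≤ B := by
    intro j hj
    exact Finset.single_le_sum (f := fun j => |interl n p j|)
      (fun i _ => abs_nonneg _) (Finset.mem_range.mpr hj)
  have hB0 : 0 ≤ B := Finset.sum_nonneg fun i _ => abs_nonneg _
  obtain ⟨K, hK⟩ := exists_nat_gt (2*B + |(e:ℚ)|)
  set r : (Fin (n-1) → ℚ) × (Fin n → ℚ) :=
    (fun i : Fin (n-1) => (e:ℚ)/2 + (K:ℚ) * ((2*n-2-2*(i:ℕ) : ℕ):ℚ),
     fun i : Fin n => (e:ℚ)/2 + (K:ℚ) * ((2*n-1-2*(i:ℕ) : ℕ):ℚ)) with hrdef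
  have hs : ∀ j, j < 2*n-1 → interl n r j = (e:ℚ)/2 + (K:ℚ) * ((2*n-1-j : ℕ):ℚ) :=
    fun j hj => interl_stair n e K j hj
  have hK0 : (0:ℚ) ≤ K := Nat.cast_nonneg K
  have habs : -(e:ℚ) ≤ |(e:ℚ)| := neg_le_abs _
  have habs' : (e:ℚ) ≤ |(e:ℚ)| := le_abs_self _
  have habs0 : 0 ≤ |(e:ℚ)| := abs_nonneg _
  -- SamePar facts for r
  have hr1 : SamePar e r.1 := by
    intro i
    refine ⟨e + 2*K*((2*n-2-2*(i:ℕ) : ℕ):ℤ), ?_, ?_⟩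
    · show 2 * ((e:ℚ)/2 + (K:ℚ) * ((2*n-2-2*(i:ℕ) : ℕ):ℚ)) = _
      push_cast; ring
    · have h : e + 2*(K:ℤ)*((2*n-2-2*(i:ℕ) : ℕ):ℤ) - e
          = ((K:ℤ)*((2*n-2-2*(i:ℕ) : ℕ):ℤ)) * 2 := by ring
      rw [h]; exact Int.mul_emod_left _ 2
  have hr2 : SamePar e r.2 := by
    intro i
    refine ⟨e + 2*K*((2*n-1-2*(i:ℕ) : ℕ):ℤ), ?_, ?_⟩
    · show 2 * ((e:ℚ)/2 + (K:ℚ) * ((2*n-1-2*(i:ℕ) : ℕ):ℚ)) = _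
      push_cast; ring
    · have h : e + 2*(K:ℤ)*((2*n-1-2*(i:ℕ) : ℕ):ℤ) - e
          = ((K:ℤ)*((2*n-1-2*(i:ℕ) : ℕ):ℤ)) * 2 := by ring
      rw [h]; exact Int.mul_emod_left _ 2
  -- casts for the last two positions
  have c1 : ((2*n-1-(2*n-2) : ℕ):ℚ) = 1 := by
    have : 2*n-1-(2*n-2) = 1 := by omega
    rw [this]; norm_num
  have c2 : ((2*n-1-(2*n-3) : ℕ):ℚ) = 2 := by
    have : 2*n-1-(2*n-3) = 2 := by omega
    rw [this]; norm_num
  refine ⟨r, ⟨⟨e, hr1⟩, ⟨e, hr2⟩, ?_, ?_⟩, ⟨2*e, ?_⟩, ⟨2*e, ?_⟩, ?_, ?_⟩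
  · -- inequalities for r
    rintro ⟨i, hi⟩
    simp only [ineqBD]
    split_ifs with h h2
    · rw [hs _ (by omega), hs _ (by omega)]
      have hle : ((2*n-1-(i+1) : ℕ):ℚ) ≤ ((2*n-1-i : ℕ):ℚ) :=
        Nat.cast_le.mpr (by omega)
      nlinarith
    · rw [hs _ (by omega), hs _ (by omega), c1, c2]
      nlinarith
    · rw [hs _ (by omega), hs _ (by omega), c1, c2]
      linarith
  · -- differences for r
    intro i j
    refine ⟨(K:ℤ) * (((2*n-2-2*(i:ℕ) : ℕ):ℤ) - ((2*n-1-2*(j:ℕ) : ℕ):ℤ)), ?_⟩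
    show (e:ℚ)/2 + (K:ℚ) * ((2*n-2-2*(i:ℕ) : ℕ):ℚ)
        - ((e:ℚ)/2 + (K:ℚ) * ((2*n-1-2*(j:ℕ) : ℕ):ℚ)) = _
    push_cast; ring
  · -- SamePar for (p+r).1
    intro i
    obtain ⟨z, hz, hpar⟩ := h1 i
    refine ⟨z + e + 2*K*((2*n-2-2*(i:ℕ) : ℕ):ℤ), ?_, ?_⟩
    · show 2 * (p.1 i + ((e:ℚ)/2 + (K:ℚ) * ((2*n-2-2*(i:ℕ) : ℕ):ℚ))) = _
      push_cast; linarith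
    · have h : z + e + 2*(K:ℤ)*((2*n-2-2*(i:ℕ) : ℕ):ℤ) - 2*e
          = (z - e) + ((K:ℤ)*((2*n-2-2*(i:ℕ) : ℕ):ℤ)) * 2 := by ring
      rw [h, Int.add_mul_emod_self_right]; exact hpar
  · -- SamePar for (p+r).2
    intro i
    obtain ⟨z, hz, hpar⟩ := h2 i
    refine ⟨z + e + 2*K*((2*n-1-2*(i:ℕ) : ℕ):ℤ), ?_, ?_⟩
    · show 2 * (p.2 i + ((e:ℚ)/2 + (K:ℚ) * ((2*n-1-2*(i:ℕ) : ℕ):ℚ))) = _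
      push_cast; linarith
    · have h : z + e + 2*(K:ℤ)*((2*n-1-2*(i:ℕ) : ℕ):ℤ) - 2*e
          = (z - e) + ((K:ℤ)*((2*n-1-2*(i:ℕ) : ℕ):ℤ)) * 2 := by ring
      rw [h, Int.add_mul_emod_self_right]; exact hpar
  · -- inequalities for p + r
    rintro ⟨i, hi⟩
    simp only [ineqBD]
    split_ifs with h h2
    · rw [interl_add, interl_add, hs _ (by omega), hs _ (by omega)]
      have e1 : ((2*n-1-i : ℕ):ℚ) = ((2*n-1-(i+1) : ℕ):ℚ) + 1 := by
        rw [show 2*n-1-i = (2*n-1-(i+1)) + 1 by omega]; push_cast; ring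
      have b1 := hB (i+1) (by omega)
      have b2 := hB i (by omega)
      have l1 : interl n p (i+1) ≤ B := le_trans (le_abs_self _) b1
      have l2 : -B ≤ interl n p i := by
        have := neg_abs_le (interl n p i); linarith
      rw [e1]; linarith
    · rw [interl_add, interl_add, hs _ (by omega), hs _ (by omega), c1, c2]
      have b1 := hB (2*n-2) (by omega)
      have b2 := hB (2*n-3) (by omega)
      have l1 : interl n p (2*n-2) ≤ B := le_trans (le_abs_self _) b1
      have l2 : -B ≤ interl n p (2*n-3) := by
        have := neg_abs_le (interl n p (2*n-3)); linarith
      linarith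
    · rw [interl_add, interl_add, hs _ (by omega), hs _ (by omega), c1, c2]
      have b1 := hB (2*n-2) (by omega)
      have b2 := hB (2*n-3) (by omega)
      have l1 : -B ≤ interl n p (2*n-2) := by
        have := neg_abs_le (interl n p (2*n-2)); linarith
      have l2 : -B ≤ interl n p (2*n-3) := by
        have := neg_abs_le (interl n p (2*n-3)); linarith
      linarith
  · -- differences for p + r
    intro i j
    obtain ⟨z, hz, hpz⟩ := h1 i
    obtain ⟨w, hw, hpw⟩ := h2 j
    obtain ⟨c, hc⟩ := half_int_diff (p.1 i) (p.2 j) z w e hz hw hpz hpw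
    refine ⟨c + (K:ℤ) * (((2*n-2-2*(i:ℕ) : ℕ):ℤ) - ((2*n-1-2*(j:ℕ) : ℕ):ℤ)), ?_⟩
    have h1' : (p+r).1 i = p.1 i + ((e:ℚ)/2 + (K:ℚ) * ((2*n-2-2*(i:ℕ) : ℕ):ℚ)) := rfl
    have h2' : (p+r).2 j = p.2 j + ((e:ℚ)/2 + (K:ℚ) * ((2*n-1-2*(j:ℕ) : ℕ):ℚ)) := rfl
    rw [h1', h2']; push_cast; push_cast at hc; linarith


/-- For the branching from `Spin_{2n}` to `Spin_{2n-1}`, let `LR` be the branching semigroup: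
by the classical branching rule (hypothesis `hLR`), `(ν,ν̂) ∈ LR` iff `ν` and `ν̂` are weights
(half-integral coordinates, each of constant parity), the interlacing inequalities
`ν̂₁ ≥ ν₁ ≥ ν̂₂ ≥ ⋯ ≥ ν_{n-1} ≥ |ν̂_n|` hold, and all differences `νᵢ − ν̂ⱼ` are integers.
Then: a pair lies in the lattice generated by `LR` iff all `2ν₁,…,2ν_{n-1},2ν̂₁,…,2ν̂_n` are
integers of the same parity; and `LR` is saturated: it equals the intersection of this
lattice with the interlacing cone. -/
theorem spin_branching_lattice_and_saturation
    (n : ℕ) (hn : 2 ≤ n)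
    (LR : Set ((Fin (n - 1) → ℚ) × (Fin n → ℚ)))
    (hLR : ∀ p, p ∈ LR ↔
      ((∃ e : ℤ, SamePar e p.1) ∧ (∃ e : ℤ, SamePar e p.2) ∧
        (∀ i : Fin (2 * n - 1), ineqBD n (i : ℕ) p) ∧
        (∀ (i : Fin (n - 1)) (j : Fin n), ∃ z : ℤ, p.1 i - p.2 j = (z : ℚ)))) :
    (∀ p, p ∈ AddSubgroup.closure LR ↔ ∃ e : ℤ, SamePar e p.1 ∧ SamePar e p.2)
    ∧ LR = {p | (∃ e : ℤ, SamePar e p.1 ∧ SamePar e p.2) ∧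
        ∀ i : Fin (2 * n - 1), ineqBD n (i : ℕ) p} := by
  -- the base fact: any element of LR has a common parity
  have hbase : ∀ p ∈ LR, ∃ e : ℤ, SamePar e p.1 ∧ SamePar e p.2 := by
    intro p hp
    obtain ⟨⟨e1, he1⟩, ⟨e2, he2⟩, hineq, hdiff⟩ := (hLR p).mp hp
    refine ⟨e2, ?_, he2⟩
    intro i
    obtain ⟨z, hz, hpz⟩ := he1 i
    obtain ⟨w, hw, hpw⟩ := he2 ⟨0, by omega⟩
    obtain ⟨c, hc⟩ := hdiff i ⟨0, by omega⟩
    refine ⟨z, hz, ?_⟩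
    -- z = 2c + w  since  p.1 i - p.2 0 = c
    have hzw : (z : ℚ) = 2*c + w := by
      push_cast; linarith
    have hzw' : z = 2*c + w := by exact_mod_cast hzw
    omega
  -- LR membership from parity + inequalities
  have hmem : ∀ p, (∃ e : ℤ, SamePar e p.1 ∧ SamePar e p.2) →
      (∀ i : Fin (2 * n - 1), ineqBD n (i : ℕ) p) → p ∈ LR := by
    rintro p ⟨e, h1, h2⟩ hineq
    refine (hLR p).mpr ⟨⟨e, h1⟩, ⟨e, h2⟩, hineq, ?_⟩
    intro i j
    obtain ⟨z, hz, hpz⟩ := h1 i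
    obtain ⟨w, hw, hpw⟩ := h2 j
    exact half_int_diff _ _ z w e hz hw hpz hpw
  constructor
  · intro p
    constructor
    · intro hp
      induction hp using AddSubgroup.closure_induction with
      | mem x hx => exact hbase x hx
      | zero => exact ⟨0, fun i => ⟨0, by simp⟩, fun i => ⟨0, by simp⟩⟩
      | add x y hx hy ihx ihy =>
          obtain ⟨e1, hx1, hx2⟩ := ihx
          obtain ⟨e2, hy1, hy2⟩ := ihy
          refine ⟨e1 + e2, ?_, ?_⟩
          · intro i
            obtain ⟨z, hz, hpz⟩ := hx1 i
            obtain ⟨w, hw, hpw⟩ := hy1 i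
            refine ⟨z + w, ?_, by omega⟩
            have : (x+y).1 i = x.1 i + y.1 i := rfl
            rw [this]; push_cast; linarith
          · intro i
            obtain ⟨z, hz, hpz⟩ := hx2 i
            obtain ⟨w, hw, hpw⟩ := hy2 i
            refine ⟨z + w, ?_, by omega⟩
            have : (x+y).2 i = x.2 i + y.2 i := rfl
            rw [this]; push_cast; linarith
      | neg x hx ihx =>
          obtain ⟨e, hx1, hx2⟩ := ihx
          refine ⟨-e, ?_, ?_⟩
          · intro i
            obtain ⟨z, hz, hpz⟩ := hx1 i
            refine ⟨-z, ?_, by omega⟩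
            have : (-x).1 i = -(x.1 i) := rfl
            rw [this]; push_cast; linarith
          · intro i
            obtain ⟨z, hz, hpz⟩ := hx2 i
            refine ⟨-z, ?_, by omega⟩
            have : (-x).2 i = -(x.2 i) := rfl
            rw [this]; push_cast; linarith
    · rintro ⟨e, h1, h2⟩
      obtain ⟨r, hrcond, hqcond⟩ := construct n hn e p h1 h2
      have hr : r ∈ LR := (hLR r).mpr hrcond
      have hq : p + r ∈ LR := (hLR (p+r)).mpr hqcond
      have : (p + r) - r ∈ AddSubgroup.closure LR :=
        sub_mem (AddSubgroup.subset_closure hq) (AddSubgroup.subset_closure hr)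
      simpa using this
  · ext p
    simp only [Set.mem_setOf_eq]
    constructor
    · intro hp
      exact ⟨hbase p hp, ((hLR p).mp hp).2.2.1⟩
    · rintro ⟨hpar, hineq⟩
      exact hmem p hpar hineq
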